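/- Let s, d ≥ 1, let X be a positive semidefinite d×d complex matrix, fix b, and let β_{k,j,b} ∈ ℂ^d (k, j ∈ {0,…,s−1}) be vectors satisfying: (i) ⟨β_{k,j,b}|X|β_{k',j',b}⟩ = 0 for all k ≠ k' and all j, j'; and (ii) Σ_{k=0}^{s−1} Σ_{j,j'=0}^{s−1} |j⟩⟨j'|·⟨β_{k,j,b}|X|β_{k,j',b}⟩ = p_b·I_s for some p_b ≥ 0. Then for every t ∈ {0,…,s−1}, the operator M_{b,t} = (1/s)·Σ_{j,k=0}^{s−1} e^{2πi t k/s}|j⟩⟨β_{k,j,b}| satisfies M_{b,t} X M_{b,t}† = (p_b/s²)·I_s; in particular each measurement outcome produces an operator proportional to the maximally mixed state I_s/s. -/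
import Mathlib
open Matrix Complex
open scoped Matrix ComplexOrder
noncomputable section

/-- The operator M_t = (1/s)·Σ_{j,k} e^{2πitk/s}|j⟩⟨β_{k,j}| (for a fixed outcome b). -/
def Mop {s d : ℕ} (β : Fin s → Fin s → (Fin d → ℂ)) (t : Fin s) :
    Matrix (Fin s) (Fin d) ℂ :=
  ((s : ℂ))⁻¹ • ∑ j : Fin s, ∑ k : Fin s,
    Complex.exp (2 * (Real.pi : ℂ) * I * ((t : ℕ) : ℂ) * ((k : ℕ) : ℂ) / (s : ℂ)) •
      Matrix.vecMulVec (fun r => if r = j then (1 : ℂ) else 0) (star (β k j))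

lemma Mop_apply {s d : ℕ} (β : Fin s → Fin s → (Fin d → ℂ)) (t : Fin s) (r : Fin s) (a : Fin d) :
    Mop β t r a = (s : ℂ)⁻¹ * ∑ k : Fin s,
      Complex.exp (2 * (Real.pi : ℂ) * I * ((t : ℕ) : ℂ) * ((k : ℕ) : ℂ) / (s : ℂ)) *
        star (β k r a) := by
  simp [Mop, vecMulVec_apply, Matrix.sum_apply, ite_mul, Finset.sum_ite_eq, Pi.star_apply]

lemma sum_swap4 {ι₁ ι₂ ι₃ ι₄ M : Type*} [Fintype ι₁] [Fintype ι₂] [Fintype ι₃] [Fintype ι₄]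
    [AddCommMonoid M] (f : ι₁ → ι₂ → ι₃ → ι₄ → M) :
    ∑ a : ι₁, ∑ b : ι₂, ∑ c : ι₃, ∑ d : ι₄, f a b c d
      = ∑ c : ι₃, ∑ d : ι₄, ∑ a : ι₁, ∑ b : ι₂, f a b c d := by
  calc ∑ a : ι₁, ∑ b : ι₂, ∑ c : ι₃, ∑ d : ι₄, f a b c d
      = ∑ a : ι₁, ∑ c : ι₃, ∑ b : ι₂, ∑ d : ι₄, f a b c d :=
        Finset.sum_congr rfl fun a _ => Finset.sum_comm
    _ = ∑ c : ι₃, ∑ a : ι₁, ∑ b : ι₂, ∑ d : ι₄, f a b c d := Finset.sum_comm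
    _ = ∑ c : ι₃, ∑ a : ι₁, ∑ d : ι₄, ∑ b : ι₂, f a b c d :=
        Finset.sum_congr rfl fun c _ => Finset.sum_congr rfl fun a _ => Finset.sum_comm
    _ = ∑ c : ι₃, ∑ d : ι₄, ∑ a : ι₁, ∑ b : ι₂, f a b c d :=
        Finset.sum_congr rfl fun c _ => Finset.sum_comm

lemma expand_prod {s : ℕ} (x c1 c2 : ℂ) (f g : Fin s → ℂ) :
    (c1 * ∑ k : Fin s, f k) * x * (c2 * ∑ k : Fin s, g k)
      = ∑ k : Fin s, ∑ k' : Fin s, (c1 * c2) * (f k * x * g k') := by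
  simp only [Finset.sum_mul, Finset.mul_sum]
  rw [Finset.sum_comm]
  exact Finset.sum_congr rfl fun _ _ => Finset.sum_congr rfl fun _ _ => by ring

/-- Equation (59) of the paper: under the orthogonality condition (i) and the
maximal-mixedness condition (ii), each measurement outcome M_t maps X to an operator
proportional to the maximally mixed state: M_t X M_t† = (p/s²)·I. -/
theorem Mop_maximally_mixed (s d : ℕ) (hs : 1 ≤ s) (hd : 1 ≤ d)
    (X : Matrix (Fin d) (Fin d) ℂ) (hX : X.PosSemidef)
    (β : Fin s → Fin s → (Fin d → ℂ)) (p : ℝ) (hp : 0 ≤ p)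
    (h1 : ∀ k k' : Fin s, k ≠ k' → ∀ j j' : Fin s,
      star (β k j) ⬝ᵥ X.mulVec (β k' j') = 0)
    (h2 : (Matrix.of fun j j' : Fin s => ∑ k : Fin s, star (β k j) ⬝ᵥ X.mulVec (β k j')) =
      (p : ℂ) • (1 : Matrix (Fin s) (Fin s) ℂ)) :
    ∀ t : Fin s, Mop β t * X * (Mop β t)ᴴ =
      ((p : ℂ) / (s : ℂ) ^ 2) • (1 : Matrix (Fin s) (Fin s) ℂ) := by
  intro t
  set e : Fin s → ℂ := fun k =>
    Complex.exp (2 * (Real.pi : ℂ) * I * ((t : ℕ) : ℂ) * ((k : ℕ) : ℂ) / (s : ℂ)) with he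
  have hee : ∀ k : Fin s, e k * star (e k) = 1 := by
    intro k
    have hs1 : star (e k) = Complex.exp
        (starRingEnd ℂ (2 * (Real.pi : ℂ) * I * ((t : ℕ) : ℂ) * ((k : ℕ) : ℂ) / (s : ℂ))) := by
      rw [he]; exact (Complex.exp_conj _).symm
    have hs2 : starRingEnd ℂ (2 * (Real.pi : ℂ) * I * ((t : ℕ) : ℂ) * ((k : ℕ) : ℂ) / (s : ℂ))
        = -(2 * (Real.pi : ℂ) * I * ((t : ℕ) : ℂ) * ((k : ℕ) : ℂ) / (s : ℂ)) := by
      simp only [map_div₀, _root_.map_mul, Complex.conj_I, Complex.conj_ofReal,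
        map_ofNat, Complex.conj_natCast]
      ring
    rw [hs1, hs2, he, ← Complex.exp_add, add_neg_cancel, Complex.exp_zero]
  ext r r'
  have L1 : (Mop β t * X * (Mop β t)ᴴ) r r' =
      ∑ a' : Fin d, ∑ a : Fin d, ∑ k : Fin s, ∑ k' : Fin s,
        ((s : ℂ)⁻¹ * (s : ℂ)⁻¹) *
          ((e k * star (β k r a)) * X a a' * (star (e k') * β k' r' a')) := by
    have hM : ∀ (r : Fin s) (a : Fin d),
        Mop β t r a = (s : ℂ)⁻¹ * ∑ k : Fin s, e k * star (β k r a) :=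
      fun r a => Mop_apply β t r a
    rw [Matrix.mul_apply]
    refine Finset.sum_congr rfl fun a' _ => ?_
    rw [Matrix.mul_apply, conjTranspose_apply, hM, Finset.sum_mul]
    refine Finset.sum_congr rfl fun a _ => ?_
    rw [hM]
    have hstar : star ((s:ℂ)⁻¹ * ∑ k' : Fin s, e k' * star (β k' r' a'))
        = (s:ℂ)⁻¹ * ∑ k' : Fin s, star (e k') * β k' r' a' := by
      simp only [star_mul', star_sum, star_star, star_inv₀, star_natCast]
    rw [hstar, expand_prod]
  rw [L1, sum_swap4]
  have L2 : ∀ k k' : Fin s,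
      ∑ a' : Fin d, ∑ a : Fin d,
        ((s:ℂ)⁻¹ * (s:ℂ)⁻¹) * ((e k * star (β k r a)) * X a a' * (star (e k') * β k' r' a'))
      = ((s:ℂ)⁻¹ * (s:ℂ)⁻¹) * (e k * star (e k')) * (star (β k r) ⬝ᵥ X.mulVec (β k' r')) := by
    intro k k'
    rw [dotProduct]
    simp only [mulVec, dotProduct, Pi.star_apply, Finset.mul_sum]
    rw [Finset.sum_comm]
    refine Finset.sum_congr rfl fun a _ => Finset.sum_congr rfl fun a' _ => by ring
  simp only [L2]
  have L3 : ∀ k : Fin s,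
      ∑ k' : Fin s, ((s:ℂ)⁻¹ * (s:ℂ)⁻¹) * (e k * star (e k')) *
        (star (β k r) ⬝ᵥ X.mulVec (β k' r'))
      = ((s:ℂ)⁻¹ * (s:ℂ)⁻¹) * (star (β k r) ⬝ᵥ X.mulVec (β k r')) := by
    intro k
    rw [Finset.sum_eq_single k]
    · rw [hee k]; ring
    · intro k' _ hne
      rw [h1 k k' (Ne.symm hne) r r', mul_zero]
    · intro h; exact absurd (Finset.mem_univ k) h
  simp only [L3]
  rw [← Finset.mul_sum]
  have h2' : ∑ k : Fin s, star (β k r) ⬝ᵥ X.mulVec (β k r')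
      = (p : ℂ) * (1 : Matrix (Fin s) (Fin s) ℂ) r r' := by
    have := congrFun (congrFun h2 r) r'
    simpa using this
  rw [h2', Matrix.smul_apply, smul_eq_mul, div_eq_mul_inv, pow_two, mul_inv]
  ring

end
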